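/- Let $(X,\mathcal{U})$ be a Hausdorff uniform space, $q$ a $\mathcal{U}$-istance, and $\psi\colon X\to\mathbb{R}$ lower semicontinuous, bounded below, with complete sublevel sets $\{z:\psi(z)\le\alpha\}$ for all $\alpha\in\mathbb{R}$. Then for each $x_0\in X$ there exists $x\in X$ with $\psi(x)\le\psi(x_0)$ and $\psi(x)-q(y,x)<\psi(y)$ for all $y\ne x$. -/

import Mathlib

/-- A sequence is `q`-Cauchy if for each `ε > 0` there is `n₀` such that
`q (x n) (x m) < ε` whenever `n₀ < m < n`. -/
def QCauchySeq {X : Type*} (q : X → X → ℝ) (x : ℕ → X) : Prop :=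
  ∀ ε : ℝ, 0 < ε → ∃ n₀ : ℕ, ∀ m n : ℕ, n₀ < m → m < n → q (x n) (x m) < ε

/-- A `𝒰`-istance on a uniform space `X`. -/
structure IsIstance (X : Type*) [UniformSpace X] (q : X → X → ℝ) : Prop where
  nonneg : ∀ x y, 0 ≤ q x y
  triangle : ∀ x y z : X, q z x ≤ q z y + q y x
  lsc : ∀ x : X, LowerSemicontinuous fun y => q y x
  cauchy : ∀ x : ℕ → X, QCauchySeq q x → CauchySeq x

section EVPAux

open Filter Set Topology

variable {X : Type*} [UniformSpace X]

/-- Auxiliary order: `a` is "below" `b` for the Ekeland construction. -/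
def EVPle (q : X → X → ℝ) (ψ : X → ℝ) (a b : X) : Prop :=
  a = b ∨ ψ a + q a b ≤ ψ b

variable {q : X → X → ℝ} {ψ : X → ℝ}

lemma evple_refl (a : X) : EVPle q ψ a a := Or.inl rfl

lemma evple_trans (hq : IsIstance X q) {a b c : X}
    (hab : EVPle q ψ a b) (hbc : EVPle q ψ b c) : EVPle q ψ a c := by
  rcases hab with rfl | hab
  · exact hbc
  rcases hbc with rfl | hbc
  · exact Or.inr hab
  refine Or.inr ?_
  have := hq.triangle c b a
  linarith

lemma evple_mono (hq : IsIstance X q) {a b : X} (h : EVPle q ψ a b) : ψ a ≤ ψ b := by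
  rcases h with rfl | h
  · exact le_refl _
  · have := hq.nonneg a b; linarith

lemma evple_antisymm [T2Space X] (hq : IsIstance X q) {a b : X}
    (hab : EVPle q ψ a b) (hba : EVPle q ψ b a) : a = b := by
  rcases hab with rfl | hab
  · rfl
  rcases hba with h | hba
  · exact h.symm
  have hab0 : q a b = 0 := by
    have h1 := hq.nonneg a b; have h2 := hq.nonneg b a; linarith
  have hba0 : q b a = 0 := by
    have h1 := hq.nonneg a b; have h2 := hq.nonneg b a; linarith
  -- the alternating sequence a, b, a, b, ... is q-Cauchy, hence Cauchy; T2 forces a = b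
  set u : ℕ → X := fun n => if n % 2 = 0 then a else b with hu
  have hval : ∀ k, u k = a ∨ u k = b := by
    intro k
    by_cases h : k % 2 = 0 <;> simp [hu, h]
  have haa : q a a ≤ 0 := by have := hq.triangle a b a; linarith
  have hbb : q b b ≤ 0 := by have := hq.triangle b a b; linarith
  have hqc : QCauchySeq q u := by
    intro ε hε
    refine ⟨0, fun m n _ _ => ?_⟩
    rcases hval n with h1 | h1 <;> rcases hval m with h2 | h2 <;>
      rw [h1, h2] <;> first
        | (rw [hab0]; exact hε) | (rw [hba0]; exact hε)
        | exact lt_of_le_of_lt haa hε | exact lt_of_le_of_lt hbb hε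
  have hcs : CauchySeq u := hq.cauchy u hqc
  have hea : Tendsto (u ∘ fun n => 2 * n) atTop (𝓝 a) := by
    have : (u ∘ fun n => 2 * n) = fun _ => a := by
      funext n
      have h2 : (2 * n) % 2 = 0 := by omega
      simp [hu, h2]
    rw [this]; exact tendsto_const_nhds
  have heb : Tendsto (u ∘ fun n => 2 * n + 1) atTop (𝓝 b) := by
    have : (u ∘ fun n => 2 * n + 1) = fun _ => b := by
      funext n
      have h2 : (2 * n + 1) % 2 = 1 := by omega
      simp [hu, h2]
    rw [this]; exact tendsto_const_nhds
  have hta : Tendsto u atTop (𝓝 a) :=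
    tendsto_nhds_of_cauchySeq_of_subseq hcs
      (tendsto_atTop_mono (fun n => by simp only [id_eq]; omega) tendsto_id) hea
  have htb : Tendsto u atTop (𝓝 b) :=
    tendsto_nhds_of_cauchySeq_of_subseq hcs
      (tendsto_atTop_mono (fun n => by simp only [id_eq]; omega) tendsto_id) heb
  exact tendsto_nhds_unique hta htb


lemma evp_chain_lb [T2Space X] (hq : IsIstance X q) (hψ : LowerSemicontinuous ψ)
    (hbd : BddBelow (Set.range ψ)) (hcomp : ∀ α : ℝ, IsComplete {z : X | ψ z ≤ α})
    (x₀ : X) (C : Set X) (hsub : C ⊆ {z : X | ψ z ≤ ψ x₀}) (hCne : C.Nonempty)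
    (hchain : IsChain (EVPle q ψ) C) :
    ∃ b : X, ψ b ≤ ψ x₀ ∧ ∀ c ∈ C, EVPle q ψ b c := by
  classical
  obtain ⟨c₀, hc₀⟩ := hCne
  set ι : ℝ := sInf (ψ '' C) with hι
  have hbb : BddBelow (ψ '' C) := by
    obtain ⟨L, hL⟩ := hbd
    exact ⟨L, fun y hy => by
      obtain ⟨z, _, rfl⟩ := hy
      exact hL ⟨z, rfl⟩⟩
  have hι_le : ∀ c ∈ C, ι ≤ ψ c := fun c hc => csInf_le hbb ⟨c, hc, rfl⟩
  have hι_lt : ∀ ε : ℝ, 0 < ε → ∃ c ∈ C, ψ c < ι + ε := by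
    intro ε hε
    have h1 : sInf (ψ '' C) < ι + ε := by rw [← hι]; linarith
    obtain ⟨y, hy, hy2⟩ := exists_lt_of_csInf_lt (Set.Nonempty.image ψ ⟨c₀, hc₀⟩) h1
    obtain ⟨c, hc, rfl⟩ := hy
    exact ⟨c, hc, hy2⟩
  have tot : ∀ a ∈ C, ∀ b ∈ C, EVPle q ψ a b ∨ EVPle q ψ b a := by
    intro a ha b hb
    by_cases hab : a = b
    · exact Or.inl (Or.inl hab)
    · exact hchain ha hb hab
  -- the sets of the filter basis
  set B : X → Set X := fun c => {z | z ∈ C ∧ EVPle q ψ z c} with hB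
  -- key claim: the filter basis is Cauchy
  have hKey : ∀ V ∈ uniformity X, ∃ c ∈ C, ∀ a ∈ B c, ∀ b ∈ B c, (a, b) ∈ V := by
    intro V hV
    set W := SetRel.symmetrize V with hW
    have hWu : W ∈ uniformity X := symmetrize_mem_uniformity hV
    haveI hWs : W.IsSymm := SetRel.isSymm_symmetrize
    have hWV : W ⊆ V := SetRel.symmetrize_subset_self
    by_contra hcon
    push_neg at hcon
    have hbad : ∀ c ∈ C, ∃ a ∈ B c, ∃ b ∈ B c, (a, b) ∉ W := by
      intro c hc
      obtain ⟨a, ha, b, hb, hab⟩ := hcon c hc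
      exact ⟨a, ha, b, hb, fun hm => hab (hWV hm)⟩
    -- main recursion step
    have key2 : ∀ (n : ℕ) (p : X), p ∈ C → ∃ w : X × X,
        w.1 ∈ C ∧ w.2 ∈ C ∧ EVPle q ψ w.1 p ∧ w.1 ≠ p ∧ EVPle q ψ w.2 w.1 ∧ w.2 ≠ w.1 ∧
        ψ w.1 < ι + (1/2 : ℝ) ^ n ∧ ((w.1, w.2) ∉ W ∨ (p, w.1) ∉ W) := by
      intro n p hp
      obtain ⟨d, hd, hdψ⟩ := hι_lt ((1/2 : ℝ) ^ n) (by positivity)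
      obtain ⟨e, heC, heψ, hep⟩ : ∃ e, e ∈ C ∧ ψ e < ι + (1/2 : ℝ) ^ n ∧ EVPle q ψ e p := by
        rcases tot d hd p hp with h1 | h2
        · exact ⟨d, hd, hdψ, h1⟩
        · exact ⟨p, hp, lt_of_le_of_lt (evple_mono hq h2) hdψ, evple_refl p⟩
      obtain ⟨a, ⟨haC, hae⟩, b, ⟨hbC, hbe⟩, hab⟩ := hbad e heC
      have habne : a ≠ b := by
        rintro rfl
        exact hab (refl_mem_uniformity hWu)
      obtain ⟨x, y, hxC, hyC, hyx, hxy_ne, hxe, hWxy⟩ :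
          ∃ x y, x ∈ C ∧ y ∈ C ∧ EVPle q ψ y x ∧ y ≠ x ∧ EVPle q ψ x e ∧ (x, y) ∉ W := by
        rcases tot a haC b hbC with h1 | h2
        · exact ⟨b, a, hbC, haC, h1, habne, hbe, fun hm => hab (SetRel.symm W hm)⟩
        · exact ⟨a, b, haC, hbC, h2, habne.symm, hae, hab⟩
      by_cases hxp : x = p
      · -- the violating pair hangs directly at p
        subst hxp
        obtain ⟨a', ⟨ha'C, ha'y⟩, b', ⟨hb'C, hb'y⟩, hab'⟩ := hbad y hyC
        have ha'b'ne : a' ≠ b' := by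
          rintro rfl
          exact hab' (refl_mem_uniformity hWu)
        obtain ⟨y', hy'C, hy'y, hy'ne⟩ : ∃ y', y' ∈ C ∧ EVPle q ψ y' y ∧ y' ≠ y := by
          rcases tot a' ha'C b' hb'C with h1 | h2
          · refine ⟨a', ha'C, ha'y, fun he => ?_⟩
            subst he
            exact ha'b'ne (evple_antisymm hq h1 hb'y)
          · refine ⟨b', hb'C, hb'y, fun he => ?_⟩
            subst he
            exact ha'b'ne (evple_antisymm hq ha'y h2)
        refine ⟨(y, y'), hyC, hy'C, hyx, hxy_ne, hy'y, hy'ne, ?_, Or.inr hWxy⟩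
        exact lt_of_le_of_lt (le_trans (evple_mono hq hyx) (evple_mono hq hxe)) heψ
      · exact ⟨(x, y), hxC, hyC, evple_trans hq hxe hep, hxp, hyx, hxy_ne,
          lt_of_le_of_lt (evple_mono hq hxe) heψ, Or.inl hWxy⟩
    choose FF hFF using key2
    -- recursive construction of the sequence of bad pairs
    let D : ℕ → {w : X × X // w.2 ∈ C} := fun n => Nat.rec
      ⟨FF 0 c₀ hc₀, (hFF 0 c₀ hc₀).2.1⟩
      (fun k ih => ⟨FF (k+1) ih.1.2 ih.2, (hFF (k+1) ih.1.2 ih.2).2.1⟩) n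
    have h0 : (D 0).1.1 ∈ C ∧ (D 0).1.2 ∈ C ∧ EVPle q ψ (D 0).1.1 c₀ ∧ (D 0).1.1 ≠ c₀ ∧
        EVPle q ψ (D 0).1.2 (D 0).1.1 ∧ (D 0).1.2 ≠ (D 0).1.1 ∧
        ψ (D 0).1.1 < ι + (1/2 : ℝ) ^ 0 ∧
        (((D 0).1.1, (D 0).1.2) ∉ W ∨ (c₀, (D 0).1.1) ∉ W) := hFF 0 c₀ hc₀
    have hS : ∀ n : ℕ, (D (n+1)).1.1 ∈ C ∧ (D (n+1)).1.2 ∈ C ∧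
        EVPle q ψ (D (n+1)).1.1 (D n).1.2 ∧ (D (n+1)).1.1 ≠ (D n).1.2 ∧
        EVPle q ψ (D (n+1)).1.2 (D (n+1)).1.1 ∧ (D (n+1)).1.2 ≠ (D (n+1)).1.1 ∧
        ψ (D (n+1)).1.1 < ι + (1/2 : ℝ) ^ (n+1) ∧
        (((D (n+1)).1.1, (D (n+1)).1.2) ∉ W ∨ ((D n).1.2, (D (n+1)).1.1) ∉ W) :=
      fun n => hFF (n+1) (D n).1.2 (D n).2
    have self : ∀ n : ℕ, (D n).1.1 ∈ C ∧ (D n).1.2 ∈ C ∧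
        EVPle q ψ (D n).1.2 (D n).1.1 ∧ (D n).1.2 ≠ (D n).1.1 ∧
        ψ (D n).1.1 < ι + (1/2 : ℝ) ^ n := by
      intro n
      cases n with
      | zero => exact ⟨h0.1, h0.2.1, h0.2.2.2.2.1, h0.2.2.2.2.2.1, h0.2.2.2.2.2.2.1⟩
      | succ m =>
        obtain ⟨a1, a2, _, _, a5, a6, a7, _⟩ := hS m
        exact ⟨a1, a2, a5, a6, a7⟩
    -- flattened sequence
    set s : ℕ → X := fun k => if k % 2 = 0 then (D (k/2)).1.1 else (D (k/2)).1.2 with hs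
    have hs_even : ∀ n, s (2*n) = (D n).1.1 := by
      intro n
      have h1 : (2*n) % 2 = 0 := by omega
      have h2 : (2*n) / 2 = n := by omega
      simp [hs, h1, h2]
    have hs_odd : ∀ n, s (2*n+1) = (D n).1.2 := by
      intro n
      have h1 : (2*n+1) % 2 = 1 := by omega
      have h2 : (2*n+1) / 2 = n := by omega
      simp [hs, h1, h2]
    have hsC : ∀ k, s k ∈ C := by
      intro k
      obtain ⟨j, hj | hj⟩ := Nat.even_or_odd' k <;> subst hj
      · rw [hs_even]; exact (self j).1
      · rw [hs_odd]; exact (self j).2.1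
    have sd : ∀ k, EVPle q ψ (s (k+1)) (s k) ∧ s (k+1) ≠ s k := by
      intro k
      obtain ⟨j, hj | hj⟩ := Nat.even_or_odd' k <;> subst hj
      · rw [hs_even, show 2*j+1 = 2*j+1 from rfl, hs_odd]
        exact ⟨(self j).2.2.1, (self j).2.2.2.1⟩
      · rw [hs_odd, show 2*j+1+1 = 2*(j+1) from by omega, hs_even]
        exact ⟨(hS j).2.2.1, (hS j).2.2.2.1⟩
    have sd2 : ∀ i j, i < j → EVPle q ψ (s j) (s i) ∧ s j ≠ s i := by
      intro i j
      induction j with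
      | zero => omega
      | succ m IH =>
        intro hij
        rcases Nat.lt_succ_iff_lt_or_eq.mp hij with h1 | h1
        · obtain ⟨e1, e2⟩ := IH h1
          refine ⟨evple_trans hq (sd m).1 e1, fun he => ?_⟩
          have : EVPle q ψ (s i) (s m) := by
            rw [← he]; exact (sd m).1
          exact e2 (evple_antisymm hq e1 this)
        · subst h1
          exact sd i
    have hψs : ∀ k, ψ (s k) < ι + (1/2 : ℝ) ^ (k/2) := by
      intro k
      obtain ⟨j, hj | hj⟩ := Nat.even_or_odd' k <;> subst hj
      · rw [hs_even, show (2*j)/2 = j from by omega]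
        exact (self j).2.2.2.2
      · rw [hs_odd, show (2*j+1)/2 = j from by omega]
        exact lt_of_le_of_lt (evple_mono hq (self j).2.2.1) (self j).2.2.2.2
    have hqc : QCauchySeq q s := by
      intro ε hε
      obtain ⟨k, hk⟩ : ∃ k : ℕ, (1/2 : ℝ) ^ k < ε :=
        exists_pow_lt_of_lt_one hε (by norm_num)
      refine ⟨2*k, fun m n hm hmn => ?_⟩
      obtain ⟨e1, e2⟩ := sd2 m n hmn
      have e3 : ψ (s n) + q (s n) (s m) ≤ ψ (s m) := e1.resolve_left e2
      have e4 : ι ≤ ψ (s n) := hι_le _ (hsC n)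
      have e5 : ψ (s m) < ι + (1/2 : ℝ) ^ (m/2) := hψs m
      have e6 : (1/2 : ℝ) ^ (m/2) ≤ (1/2 : ℝ) ^ k :=
        pow_le_pow_of_le_one (by norm_num) (by norm_num) (by omega)
      linarith
    have hcs : CauchySeq s := hq.cauchy s hqc
    rw [cauchySeq_iff] at hcs
    obtain ⟨N, hN⟩ := hcs W hWu
    rcases (hS N).2.2.2.2.2.2.2 with hbad1 | hbad2
    · have : (s (2*(N+1)), s (2*(N+1)+1)) ∈ W :=
        hN _ (by omega) _ (by omega)
      rw [hs_even, hs_odd] at this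
      exact hbad1 this
    · have : (s (2*N+1), s (2*(N+1))) ∈ W :=
        hN _ (by omega) _ (by omega)
      rw [hs_odd, hs_even] at this
      exact hbad2 this
  -- build the Cauchy filter from the basis
  haveI : Nonempty C := ⟨⟨c₀, hc₀⟩⟩
  set F : Filter X := ⨅ c : C, Filter.principal (B c.1) with hF
  have hdir : Directed (· ≥ ·) fun c : C => B c.1 := by
    intro i j
    rcases tot i.1 i.2 j.1 j.2 with h1 | h2
    · exact ⟨i, subset_rfl, fun z hz => ⟨hz.1, evple_trans hq hz.2 h1⟩⟩
    · exact ⟨j, fun z hz => ⟨hz.1, evple_trans hq hz.2 h2⟩, subset_rfl⟩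
  have hFB : F.HasBasis (fun _ : C => True) fun c : C => B c.1 :=
    Filter.hasBasis_iInf_principal hdir
  have hFne : F.NeBot := by
    rw [hFB.neBot_iff]
    exact fun {i} _ => ⟨i.1, i.2, evple_refl _⟩
  have hFC : Cauchy F := by
    refine ⟨hFne, fun V hV => ?_⟩
    obtain ⟨c, hc, hcV⟩ := hKey V hV
    refine Filter.mem_prod_iff.mpr ⟨B c, hFB.mem_of_mem (i := ⟨c, hc⟩) trivial,
      B c, hFB.mem_of_mem (i := ⟨c, hc⟩) trivial, ?_⟩
    rintro ⟨z1, z2⟩ ⟨hz1, hz2⟩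
    exact hcV z1 hz1 z2 hz2
  have hFle : F ≤ Filter.principal {z : X | ψ z ≤ ψ x₀} := by
    refine le_trans (iInf_le _ ⟨c₀, hc₀⟩) ?_
    rw [Filter.le_principal_iff, Filter.mem_principal]
    exact fun z hz => hsub hz.1
  obtain ⟨b, hbE, hFb⟩ := hcomp (ψ x₀) F hFC hFle
  -- the limit is below ι
  have hψb : ψ b ≤ ι := by
    by_contra hlt
    push_neg at hlt
    set y : ℝ := (ι + ψ b) / 2 with hy
    have hy1 : ι < y := by rw [hy]; linarith
    have hy2 : y < ψ b := by rw [hy]; linarith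
    have hA : {z : X | y < ψ z} ∈ F := hFb (hψ b y hy2)
    obtain ⟨c, hc, hcψ⟩ := hι_lt (y - ι) (by linarith)
    have hBc : B c ∈ F := hFB.mem_of_mem (i := ⟨c, hc⟩) trivial
    obtain ⟨z, hz1, hz2, hz3⟩ := F.nonempty_of_mem (Filter.inter_mem hA hBc)
    have : ψ z ≤ ψ c := evple_mono hq hz3
    have : ψ c < y := by linarith
    exact absurd hz1 (by simp only [Set.mem_setOf_eq]; push_neg; linarith)
  refine ⟨b, le_trans (le_trans hψb (hι_le c₀ hc₀)) (hsub hc₀), ?_⟩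
  intro c hc
  by_cases hmin : ∃ c' ∈ C, EVPle q ψ c' c ∧ c' ≠ c
  · obtain ⟨c', hc', hc'le, hc'ne⟩ := hmin
    refine Or.inr ?_
    have hqbc : q b c ≤ ψ c - ι := by
      by_contra hgt
      push_neg at hgt
      set y : ℝ := (ψ c - ι + q b c) / 2 with hy
      have hy1 : ψ c - ι < y := by rw [hy]; linarith
      have hy2 : y < q b c := by rw [hy]; linarith
      have hA : {z : X | y < q z c} ∈ F := hFb (hq.lsc c b y hy2)
      have hBc' : B c' ∈ F := hFB.mem_of_mem (i := ⟨c', hc'⟩) trivial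
      obtain ⟨z, hz1, hz2, hz3⟩ := F.nonempty_of_mem (Filter.inter_mem hA hBc')
      have hzc : EVPle q ψ z c := evple_trans hq hz3 hc'le
      have hzne : z ≠ c := by
        rintro rfl
        exact hc'ne (evple_antisymm hq hc'le hz3)
      have e1 : ψ z + q z c ≤ ψ c := hzc.resolve_left hzne
      have e2 : ι ≤ ψ z := hι_le _ hz2
      have : y < q z c := hz1
      linarith
    linarith [hι_le c hc, hψb, hqbc]
  · -- c is a minimum of the chain, so B c = {c} and b = c
    push_neg at hmin
    have hBc : B c ⊆ {c} := by
      intro z hz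
      rcases hz with ⟨hz1, hz2⟩
      exact hmin z hz1 hz2
    have h1 : F ≤ Filter.principal {c} := by
      refine le_trans (iInf_le _ ⟨c, hc⟩) ?_
      rw [Filter.le_principal_iff, Filter.mem_principal]
      exact hBc
    have h2 : (nhds b ⊓ Filter.principal {c}).NeBot :=
      Filter.neBot_of_le (le_inf hFb h1)
    have h3 : b ∈ closure ({c} : Set X) := mem_closure_iff_clusterPt.mpr h2
    rw [closure_singleton] at h3
    exact Or.inl h3

end EVPAux

theorem ekeland_variational_principle_i {X : Type*} [UniformSpace X] [T2Space X]
    (q : X → X → ℝ) (hq : IsIstance X q)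
    (ψ : X → ℝ) (hψ : LowerSemicontinuous ψ) (hbd : BddBelow (Set.range ψ))
    (hcomp : ∀ α : ℝ, IsComplete {z : X | ψ z ≤ α})
    (x₀ : X) :
    ∃ x : X, ψ x ≤ ψ x₀ ∧ ∀ y, y ≠ x → ψ x - q y x < ψ y := by
  classical
  -- Zorn's lemma on the subtype of points below `x₀` with the reversed Ekeland order
  let T := {z : X // ψ z ≤ ψ x₀}
  let r : T → T → Prop := fun a b => EVPle q ψ b.1 a.1
  have hchains : ∀ c : Set T, IsChain r c → ∃ ub, ∀ a ∈ c, r a ub := by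
    intro c hc
    rcases c.eq_empty_or_nonempty with rfl | ⟨a₀, ha₀⟩
    · exact ⟨⟨x₀, le_refl _⟩, by simp⟩
    · set C : Set X := Subtype.val '' c with hC
      have hsub : C ⊆ {z : X | ψ z ≤ ψ x₀} := by
        rintro z ⟨w, _, rfl⟩
        exact w.2
      have hCne : C.Nonempty := ⟨a₀.1, a₀, ha₀, rfl⟩
      have hchain : IsChain (EVPle q ψ) C := by
        rintro z1 ⟨w1, hw1, rfl⟩ z2 ⟨w2, hw2, rfl⟩ hne
        have hwne : w1 ≠ w2 := fun h => hne (by rw [h])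
        rcases hc hw1 hw2 hwne with h1 | h2
        · exact Or.inr h1
        · exact Or.inl h2
      obtain ⟨b, hbE, hb⟩ := evp_chain_lb hq hψ hbd hcomp x₀ C hsub hCne hchain
      exact ⟨⟨b, hbE⟩, fun a ha => hb a.1 ⟨a, ha, rfl⟩⟩
  obtain ⟨m, hm⟩ := exists_maximal_of_chains_bounded hchains
    (fun {a b c} hab hbc => evple_trans hq hbc hab)
  refine ⟨m.1, m.2, ?_⟩
  intro y hy
  by_contra hcon
  push_neg at hcon
  have h1 : ψ y + q y m.1 ≤ ψ m.1 := by linarith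
  have hyE : ψ y ≤ ψ x₀ := by
    have := hq.nonneg y m.1
    exact le_trans (by linarith) m.2
  have h2 : r m ⟨y, hyE⟩ := Or.inr h1
  have h3 := hm _ h2
  exact hy (evple_antisymm hq (Or.inr h1) h3)
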